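/- Let (V, ω) be a finite-dimensional real symplectic vector space, J an ω-compatible complex structure on V, and q_J the quadratic form q_J(v) = ω(v, Jv) (which is positive definite). Let ψ : V → ℂ be a differentiable function. Then ψ satisfies the polarization equations ∇_xψ = 0 for all x ∈ V_J^{0,1}, i.e. for all u, v ∈ V: Dψ(v)(u) + i·Dψ(v)(Ju) + (i/2)·(ω(u,v) + i·ω(Ju,v))·ψ(v) = 0, if and only if the function φ(v) := e^{q_J(v)/4}·ψ(v) is J-holomorphic, i.e. Dφ(v)(Ju) = i·Dφ(v)(u) for all u, v ∈ V. (In other words, every polarized section has the form ψ = e^{-q_J/4}·φ with φ a unique J-holomorphic function.) -/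

import Mathlib

open Complex

/-- The polarization equations `∇_x ψ = 0` for all `x ∈ V_J^{0,1}`, written out for the
pre-quantum covariant derivative `∇_x = L_x + (i/2) ι_x ω` extended `ℂ`-linearly to
`x = u + i·Ju`. -/
def IsPolarizedSection {V : Type*} [NormedAddCommGroup V] [NormedSpace ℝ V]
    (ω : LinearMap.BilinForm ℝ V) (J : V →ₗ[ℝ] V) (ψ : V → ℂ) : Prop :=
  ∀ u v : V,
    fderiv ℝ ψ v u + Complex.I * fderiv ℝ ψ v (J u)
      + (Complex.I / 2) * ((ω u v : ℂ) + Complex.I * (ω (J u) v : ℂ)) * ψ v = 0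

/-- Let `(V, ω)` be a finite-dimensional real symplectic vector space, `J` an
`ω`-compatible complex structure, and `q_J(v) = ω(v, Jv)`.  A differentiable `ψ : V → ℂ` satisfies
the polarization equations iff `φ(v) := e^{q_J(v)/4} ψ(v)` is `J`-holomorphic, i.e.
`Dφ(v)(Ju) = i·Dφ(v)(u)` for all `u, v`. -/
theorem polarized_iff_gaussian_times_holomorphic
    {V : Type*} [NormedAddCommGroup V] [NormedSpace ℝ V] [FiniteDimensional ℝ V]
    (ω : LinearMap.BilinForm ℝ V)
    (halt : ∀ x : V, ω x x = 0)
    (hnondeg : ∀ x : V, (∀ y : V, ω x y = 0) → x = 0)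
    (J : V →ₗ[ℝ] V)
    (hJ : J ∘ₗ J = -LinearMap.id)
    (hcompat : ∀ x y : V, ω (J x) (J y) = ω x y)
    (hpos : ∀ x : V, x ≠ 0 → 0 < ω x (J x))
    (ψ : V → ℂ) (hψ : Differentiable ℝ ψ) :
    IsPolarizedSection ω J ψ ↔
      (∀ u v : V,
        fderiv ℝ (fun w => Complex.exp ((ω w (J w) : ℂ) / 4) * ψ w) v (J u) =
          Complex.I * fderiv ℝ (fun w => Complex.exp ((ω w (J w) : ℂ) / 4) * ψ w) v u) := by
  
  -- basic algebraic facts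
  have hskew : ∀ x y : V, ω x y = -ω y x := by
    intro x y
    have h := halt (x + y)
    simp only [map_add, LinearMap.add_apply, halt] at h
    linarith
  have hJapp : ∀ u : V, J (J u) = -u := by
    intro u
    have := congrArg (fun f : V →ₗ[ℝ] V => f u) hJ
    simpa using this
  have hωJ : ∀ u v : V, ω v (J u) = ω u (J v) := by
    intro u v
    have h1 : ω (J v) (J (J u)) = ω v (J u) := hcompat v (J u)
    rw [hJapp] at h1
    simp only [map_neg] at h1
    have h2 := hskew (J v) u
    linarith
  -- the bounded bilinear map (x, y) ↦ ω x (J y)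
  set b : V →ₗ[ℝ] V →ₗ[ℝ] ℝ := ω.compl₂ J with hb
  set B : V →L[ℝ] V →L[ℝ] ℝ :=
    LinearMap.toContinuousLinearMap
      ((LinearMap.toContinuousLinearMap :
          (V →ₗ[ℝ] ℝ) ≃ₗ[ℝ] (V →L[ℝ] ℝ)).toLinearMap ∘ₗ b) with hB
  have hBapp : ∀ x y : V, B x y = ω x (J y) := by
    intro x y
    simp [hB, hb]
  have hbil : IsBoundedBilinearMap ℝ (fun p : V × V => ω p.1 (J p.2)) := by
    have hfe : (fun p : V × V => ω p.1 (J p.2)) = fun p : V × V => B p.1 p.2 := by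
      funext p
      exact (hBapp p.1 p.2).symm
    rw [hfe]
    exact B.isBoundedBilinearMap
  -- derivative of the quadratic form
  have hq : ∀ v : V, HasFDerivAt (fun w => ω w (J w))
      ((hbil.deriv (v, v)).comp ((ContinuousLinearMap.id ℝ V).prod (ContinuousLinearMap.id ℝ V))) v := by
    intro v
    have h1 := hbil.hasFDerivAt (v, v)
    have h2 : HasFDerivAt (fun w : V => (w, w))
        ((ContinuousLinearMap.id ℝ V).prod (ContinuousLinearMap.id ℝ V)) v :=
      HasFDerivAt.prodMk (hasFDerivAt_id v) (hasFDerivAt_id v)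
    have h3 := HasFDerivAt.comp (f := fun w : V => (w, w)) v h1 h2
    exact h3
  -- the key derivative computation
  have key : ∀ v u : V, fderiv ℝ (fun w => Complex.exp ((ω w (J w) : ℂ) / 4) * ψ w) v u
      = Complex.exp ((ω v (J v) : ℂ) / 4)
          * (fderiv ℝ ψ v u + ((ω u (J v) : ℂ) / 2) * ψ v) := by
    intro v u
    have hc : HasFDerivAt (fun w : V => ((ω w (J w) : ℝ) : ℂ) / 4)
        ((1 / 4 : ℂ) • (Complex.ofRealCLM.comp
          ((hbil.deriv (v, v)).comp ((ContinuousLinearMap.id ℝ V).prod (ContinuousLinearMap.id ℝ V))))) v := by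
      have h4 := (Complex.ofRealCLM.hasFDerivAt.comp v (hq v)).const_smul (1 / 4 : ℂ)
      have hfun : (fun w : V => ((ω w (J w) : ℝ) : ℂ) / 4)
          = (1 / 4 : ℂ) • (⇑Complex.ofRealCLM ∘ fun w => ω w (J w)) := by
        funext w
        show ((ω w (J w) : ℝ) : ℂ) / 4 = (1 / 4 : ℂ) • ((ω w (J w) : ℝ) : ℂ)
        rw [smul_eq_mul]
        ring
      rw [hfun]
      exact h4
    have hEd := hc.cexp
    have hprod : HasFDerivAt (fun w => Complex.exp ((ω w (J w) : ℂ) / 4) * ψ w) _ v :=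
      hEd.mul (hψ v).hasFDerivAt
    rw [hprod.fderiv]
    simp only [ContinuousLinearMap.add_apply, ContinuousLinearMap.smul_apply,
      ContinuousLinearMap.comp_apply, ContinuousLinearMap.prod_apply,
      ContinuousLinearMap.coe_id', id_eq, Complex.ofRealCLM_apply,
      hbil.deriv_apply, smul_eq_mul]
    have h5 : ω v (J u) + ω u (J v) = 2 * ω u (J v) := by
      rw [hωJ u v]; ring
    rw [h5]
    push_cast
    ring
  have e6 : ∀ u v : V, ((ω (J u) (J v) : ℝ) : ℂ) = ((ω u v : ℝ) : ℂ) := by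
    intro u v; exact_mod_cast hcompat u v
  have e4 : ∀ u v : V, ((ω (J u) v : ℝ) : ℂ) = -((ω u (J v) : ℝ) : ℂ) := by
    intro u v
    have e3 : (ω (J u) v : ℝ) = -ω u (J v) := by
      linarith [hωJ u v, hskew (J u) v]
    exact_mod_cast e3
  constructor
  · intro h u v
    have hpol := h u v
    rw [e4 u v] at hpol
    rw [key v (J u), key v u, e6 u v]
    linear_combination (-Complex.I * Complex.exp ((ω v (J v) : ℂ) / 4)) * hpol
      + (Complex.exp ((ω v (J v) : ℂ) / 4)
          * (fderiv ℝ ψ v (J u) + ((ω u v : ℂ) / 2) * ψ v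
              - Complex.I * ((ω u (J v) : ℂ) / 2) * ψ v)) * Complex.I_sq
  · intro h u v
    have hhol := h u v
    rw [key v (J u), key v u, e6 u v] at hhol
    have hEne : Complex.exp ((ω v (J v) : ℂ) / 4) ≠ 0 := Complex.exp_ne_zero _
    have hhol2 : Complex.exp ((ω v (J v) : ℂ) / 4)
          * (fderiv ℝ ψ v (J u) + ((ω u v : ℂ) / 2) * ψ v)
        = Complex.exp ((ω v (J v) : ℂ) / 4)
          * (Complex.I * (fderiv ℝ ψ v u + ((ω u (J v) : ℂ) / 2) * ψ v)) := by
      linear_combination hhol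
    have hhol' := mul_left_cancel₀ hEne hhol2
    rw [e4 u v]
    linear_combination Complex.I * hhol' + (fderiv ℝ ψ v u) * Complex.I_sq
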